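/- Let γ(t) = (t, 0, 0) for t ∈ [0,1] and suppose (x(t), y(t), z(t)) is a C¹ curve with z'(t) = y(t)²·x'(t) for all t, x(0) = 0, x(1) = 1, z(0) = z(1) = 0, and x'(t) > 0 for all t. Then y(t) = 0 and z(t) = 0 for all t ∈ [0,1]. -/

import Mathlib

open Set MeasureTheory intervalIntegral

theorem stmt17 (x y z : ℝ → ℝ)
    (hx : ContDiff ℝ 1 x) (hy : ContDiff ℝ 1 y) (hz : ContDiff ℝ 1 z)
    (hhor : ∀ t ∈ Set.Icc (0 : ℝ) 1, deriv z t = (y t) ^ 2 * deriv x t)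
    (hx0 : x 0 = 0) (hx1 : x 1 = 1) (hz0 : z 0 = 0) (hz1 : z 1 = 0)
    (hx' : ∀ t ∈ Set.Icc (0 : ℝ) 1, 0 < deriv x t) :
    ∀ t ∈ Set.Icc (0 : ℝ) 1, y t = 0 ∧ z t = 0 := by
  have hzc : Continuous (deriv z) := hz.continuous_deriv le_rfl
  have hftc : ∀ t ∈ Set.Icc (0:ℝ) 1, ∫ s in (0:ℝ)..t, deriv z s = z t - z 0 := by
    intro t _
    exact integral_deriv_eq_sub (fun s _ => (hz.differentiable one_ne_zero).differentiableAt)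
      (hzc.intervalIntegrable 0 t)
  have hint0 : ∫ s in (0:ℝ)..1, deriv z s = 0 := by
    rw [hftc 1 (by norm_num), hz1, hz0, sub_zero]
  have hnn : 0 ≤ᵐ[volume.restrict (Set.Ioc (0:ℝ) 1)] deriv z := by
    filter_upwards [ae_restrict_mem measurableSet_Ioc] with s hs
    rw [hhor s (Ioc_subset_Icc_self hs)]
    exact mul_nonneg (sq_nonneg _) (hx' s (Ioc_subset_Icc_self hs)).le
  have hae : deriv z =ᵐ[volume.restrict (Set.Ioc (0:ℝ) 1)] 0 :=
    (integral_eq_zero_iff_of_le_of_nonneg_ae (by norm_num) hnn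
      (hzc.intervalIntegrable 0 1)).mp hint0
  have hae' : deriv z =ᵐ[volume.restrict (Set.Icc (0:ℝ) 1)] 0 := by
    rwa [Measure.restrict_congr_set Ioc_ae_eq_Icc] at hae
  have heq : Set.EqOn (deriv z) 0 (Set.Icc (0:ℝ) 1) := by
    apply Measure.eqOn_of_ae_eq hae' hzc.continuousOn continuousOn_const
    rw [interior_Icc, closure_Ioo (by norm_num : (0:ℝ) ≠ 1)]
  intro t ht
  have hy0 : y t = 0 := by
    have h1 : (y t) ^ 2 * deriv x t = 0 := by rw [← hhor t ht]; exact heq ht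
    have := (mul_eq_zero.mp h1).resolve_right (hx' t ht).ne'
    exact pow_eq_zero_iff (by norm_num) |>.mp this
  refine ⟨hy0, ?_⟩
  have : ∫ s in (0:ℝ)..t, deriv z s = 0 := by
    rw [intervalIntegral.integral_congr (g := fun _ => (0:ℝ))]
    · simp
    · intro s hs
      apply heq
      rw [Set.uIcc_of_le ht.1] at hs
      exact ⟨hs.1, hs.2.trans ht.2⟩
  have := hftc t ht
  rw [this] at *
  linarith [hftc t ht]
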